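/- Let n be an integer and let f(X) = X³ − (n−1)X² − (n+2)X − 1. Then f is irreducible over ℚ, and if λ ∈ ℂ is a root of f, then λ ≠ 0, λ ≠ −1, and the numbers −1/(λ+1) and −(λ+1)/λ are also roots of f; these three numbers λ, −1/(λ+1), −(λ+1)/λ are precisely the three roots of f. -/

import Mathlib

open Polynomial

lemma shanks_aeval (n : ℤ) (z : ℂ) :
    Polynomial.aeval z
        (X ^ 3 - C ((n : ℚ) - 1) * X ^ 2 - C ((n : ℚ) + 2) * X - 1 : Polynomial ℚ)
      = z ^ 3 - ((n : ℂ) - 1) * z ^ 2 - ((n : ℂ) + 2) * z - 1 := by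
  simp only [map_sub, map_mul, map_pow, map_one, aeval_X, aeval_C, eq_ratCast]
  push_cast
  ring

lemma shanks_irr (n : ℤ) :
    Irreducible
      (X ^ 3 - C ((n : ℚ) - 1) * X ^ 2 - C ((n : ℚ) + 2) * X - 1 : Polynomial ℚ) := by
  set p : Polynomial ℚ := X ^ 3 - C ((n : ℚ) - 1) * X ^ 2 - C ((n : ℚ) + 2) * X - 1 with hp
  set g : Polynomial ℤ := X ^ 3 - C ((n : ℤ) - 1) * X ^ 2 - C ((n : ℤ) + 2) * X - 1 with hg
  have e1 : ((n:ℚ) - 1) = algebraMap ℤ ℚ (n - 1) := by simp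
  have e2 : ((n:ℚ) + 2) = algebraMap ℤ ℚ (n + 2) := by simp
  have hmap : p = g.map (algebraMap ℤ ℚ) := by
    rw [hp, hg, e1, e2]
    simp only [Polynomial.map_sub, Polynomial.map_mul, Polynomial.map_pow,
      Polynomial.map_one, map_C, Polynomial.map_X]
  have hdeg : p.natDegree = 3 := by
    rw [hp]; compute_degree!
  rw [Polynomial.irreducible_iff_roots_eq_zero_of_degree_le_three (by omega) (by omega)]
  by_contra hroots
  obtain ⟨r, hr⟩ := Multiset.exists_mem_of_ne_zero hroots
  have hp0 : p ≠ 0 := fun h => by simp [h] at hdeg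
  have hr0 : Polynomial.eval r p = 0 := (Polynomial.mem_roots hp0).mp hr
  have hg0 : Polynomial.aeval r g = 0 := by
    rw [Polynomial.aeval_def]; rwa [hmap, Polynomial.eval_map] at hr0
  have hmonic : g.Monic := by
    rw [hg]; monicity!
  obtain ⟨r', hr', hdvd⟩ := exists_integer_of_is_root_of_monic hmonic hg0
  have hc0 : g.coeff 0 = -1 := by simp [hg, coeff_one]
  rw [hc0] at hdvd
  have hcase : r' = 1 ∨ r' = -1 := by
    rcases Int.isUnit_iff.mp (isUnit_of_dvd_unit hdvd (by norm_num)) with h | h <;> tauto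
  have heval : (r' : ℚ) ^ 3 - ((n:ℚ) - 1) * (r':ℚ) ^ 2 - ((n:ℚ) + 2) * (r':ℚ) - 1 = 0 := by
    have h2 := hr0
    rw [hp] at h2
    rw [hr'] at h2
    simpa using h2
  rcases hcase with rfl | rfl
  · push_cast at heval
    have h3 : (2 * n + 1 : ℚ) = 0 := by linarith
    have h4 : (2 * n + 1 : ℤ) = 0 := by exact_mod_cast h3
    omega
  · push_cast at heval
    linarith

lemma shanks_nonzero (n : ℤ) (l : ℂ)
    (h : l ^ 3 - ((n:ℂ) - 1) * l ^ 2 - ((n:ℂ) + 2) * l - 1 = 0) :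
    l ≠ 0 ∧ l + 1 ≠ 0 ∧ l ^ 2 + l + 1 ≠ 0 := by
  have hl0 : l ≠ 0 := by rintro rfl; simp at h
  have hl1 : l + 1 ≠ 0 := by
    intro h1
    have hl : l = -1 := by linear_combination h1
    rw [hl] at h
    have h2 : (1:ℂ) = 0 := by linear_combination h
    exact one_ne_zero h2
  refine ⟨hl0, hl1, ?_⟩
  intro hq
  have hlin : -3 * l + (n:ℂ) - 1 = 0 := by linear_combination h - (l - (n:ℂ)) * hq
  have hkey : (n:ℂ) ^ 2 + (n:ℂ) + 7 = 0 := by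
    linear_combination 9 * hq + (3 * l + (n:ℂ) + 2) * hlin
  have hZ : (n ^ 2 + n + 7 : ℤ) = 0 := by exact_mod_cast hkey
  nlinarith [sq_nonneg (2 * n + 1)]

/-- For `n ∈ ℤ`, Shanks' simplest cubic polynomial
`f(X) = X³ - (n-1)X² - (n+2)X - 1` is irreducible over `ℚ`, and if `l ∈ ℂ` is a root
of `f`, then `l ≠ 0`, `l ≠ -1`, the numbers `-1/(l+1)` and `-(l+1)/l` are also roots
of `f`, and `l`, `-1/(l+1)`, `-(l+1)/l` are pairwise distinct and are precisely the
three roots of `f` in `ℂ`. -/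
theorem stmt_15 (n : ℤ) :
    Irreducible
      (X ^ 3 - C ((n : ℚ) - 1) * X ^ 2 - C ((n : ℚ) + 2) * X - 1 : Polynomial ℚ) ∧
    ∀ l : ℂ,
      Polynomial.aeval l
          (X ^ 3 - C ((n : ℚ) - 1) * X ^ 2 - C ((n : ℚ) + 2) * X - 1 : Polynomial ℚ)
        = 0 →
      l ≠ 0 ∧ l ≠ -1 ∧
      Polynomial.aeval (-1 / (l + 1))
          (X ^ 3 - C ((n : ℚ) - 1) * X ^ 2 - C ((n : ℚ) + 2) * X - 1 : Polynomial ℚ)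
        = 0 ∧
      Polynomial.aeval (-(l + 1) / l)
          (X ^ 3 - C ((n : ℚ) - 1) * X ^ 2 - C ((n : ℚ) + 2) * X - 1 : Polynomial ℚ)
        = 0 ∧
      l ≠ -1 / (l + 1) ∧ l ≠ -(l + 1) / l ∧ -1 / (l + 1) ≠ -(l + 1) / l ∧
      (∀ z : ℂ,
        Polynomial.aeval z
            (X ^ 3 - C ((n : ℚ) - 1) * X ^ 2 - C ((n : ℚ) + 2) * X - 1 : Polynomial ℚ)
          = 0 →
        z = l ∨ z = -1 / (l + 1) ∨ z = -(l + 1) / l) := by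
  refine ⟨shanks_irr n, ?_⟩
  intro l hl
  rw [shanks_aeval] at hl
  obtain ⟨hl0, hl1, hq⟩ := shanks_nonzero n l hl
  have hlne1 : l ≠ -1 := fun e => hl1 (by rw [e]; ring)
  have hmu : (-1 / (l+1)) ^ 3 - ((n:ℂ) - 1) * (-1 / (l+1)) ^ 2
      - ((n:ℂ) + 2) * (-1 / (l+1)) - 1 = 0 := by
    field_simp
    linear_combination (-1) * hl
  have hnu : (-(l+1) / l) ^ 3 - ((n:ℂ) - 1) * (-(l+1) / l) ^ 2
      - ((n:ℂ) + 2) * (-(l+1) / l) - 1 = 0 := by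
    field_simp
    linear_combination hl
  have hsum : -1 / (l+1) + -(l+1)/l = ((n:ℂ) - 1) - l := by
    field_simp
    linear_combination hl
  have hprod : (-1 / (l+1)) * (-(l+1)/l) = l^2 - ((n:ℂ)-1)*l - ((n:ℂ)+2) := by
    field_simp
    linear_combination -hl
  refine ⟨hl0, hlne1, by rw [shanks_aeval]; exact hmu, by rw [shanks_aeval]; exact hnu,
    fun he => hq ?_, fun he => hq ?_, fun he => hq ?_, ?_⟩
  · field_simp at he
    linear_combination he
  · field_simp at he
    linear_combination he
  · field_simp at he
    linear_combination he
  · intro z hz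
    rw [shanks_aeval] at hz
    rcases eq_or_ne z l with rfl | hzl
    · exact Or.inl rfl
    have hfac : (z - l) * (z ^ 2 + z * l + l ^ 2 - ((n:ℂ) - 1) * (z + l) - ((n:ℂ) + 2)) = 0 := by
      linear_combination hz - hl
    have hqz : z ^ 2 + z * l + l ^ 2 - ((n:ℂ) - 1) * (z + l) - ((n:ℂ) + 2) = 0 :=
      (mul_eq_zero.mp hfac).resolve_left (sub_ne_zero.mpr hzl)
    have h2 : (z - (-1 / (l+1))) * (z - (-(l+1)/l)) = 0 := by
      linear_combination hqz - z * hsum + hprod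
    rcases mul_eq_zero.mp h2 with h3 | h3
    · exact Or.inr (Or.inl (sub_eq_zero.mp h3))
    · exact Or.inr (Or.inr (sub_eq_zero.mp h3))
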